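/- Let H, M, c be appropriate and n ∈ N. Suppose m_0 is an H-symmetric (center c) trigonometric polynomial with m_0(0) = 1 that obeys the sum rule of order n. Then there exists a trigonometric polynomial m̃_0, H-symmetric with respect to c, with m̃_0(0) = 1 and D^β(1 − m_0(ξ) conj(m̃_0(ξ)))|_{ξ=0} = 0 for all β with |β| < n. -/
import Mathlib

open Matrix BigOperators

def matR {d : ℕ} (A : Matrix (Fin d) (Fin d) ℤ) : Matrix (Fin d) (Fin d) ℝ :=
  A.map Int.cast

def intc {d : ℕ} (k : Fin d → ℤ) : Fin d → ℝ := fun i => (k i : ℝ)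

noncomputable def e2pi (x : ℝ) : ℂ := Complex.exp (2 * Real.pi * Complex.I * x)

def dotv {d : ℕ} (x y : Fin d → ℝ) : ℝ := ∑ i, x i * y i

def IsTrigPoly {d : ℕ} (f : (Fin d → ℝ) → ℂ) : Prop :=
  ∃ h : (Fin d → ℤ) →₀ ℂ, ∀ ξ, f ξ = ∑ k ∈ h.support, h k * e2pi (dotv (intc k) ξ)

namespace DualMaskAux

variable {d : ℕ}

lemma e2pi_add (a b : ℝ) : e2pi (a + b) = e2pi a * e2pi b := by
  simp only [e2pi, ← Complex.exp_add]; push_cast; ring_nf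

lemma e2pi_zero : e2pi 0 = 1 := by simp [e2pi]

lemma e2pi_mul_neg (a : ℝ) : e2pi a * e2pi (-a) = 1 := by
  rw [← e2pi_add, add_neg_cancel, e2pi_zero]

lemma conj_e2pi (a : ℝ) : (starRingEnd ℂ) (e2pi a) = e2pi (-a) := by
  simp only [e2pi, ← Complex.exp_conj, _root_.map_mul, Complex.conj_I, Complex.conj_ofReal,
    map_ofNat]
  push_cast; ring_nf

noncomputable def char (k : Fin d → ℤ) : (Fin d → ℝ) → ℂ := fun ξ => e2pi (dotv (intc k) ξ)

lemma dotv_add_left (x y ξ : Fin d → ℝ) : dotv (x + y) ξ = dotv x ξ + dotv y ξ := by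
  simp [dotv, add_mul, Finset.sum_add_distrib]

lemma dotv_neg_left (x ξ : Fin d → ℝ) : dotv (-x) ξ = -dotv x ξ := by
  simp [dotv]

lemma dotv_zero_right (x : Fin d → ℝ) : dotv x 0 = 0 := by simp [dotv]

lemma intc_add (k l : Fin d → ℤ) : intc (k + l) = intc k + intc l := by
  funext i; simp [intc]

lemma intc_neg (k : Fin d → ℤ) : intc (-k) = -intc k := by
  funext i; simp [intc]

lemma intc_zero : intc (0 : Fin d → ℤ) = 0 := by funext i; simp [intc]

lemma dotv_transpose (A : Matrix (Fin d) (Fin d) ℝ) (v ξ : Fin d → ℝ) :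
    dotv v (Aᵀ.mulVec ξ) = dotv (A.mulVec v) ξ := by
  simp only [dotv, Matrix.mulVec, dotProduct, Matrix.transpose_apply, Finset.sum_mul,
    Finset.mul_sum]
  rw [Finset.sum_comm]
  exact Finset.sum_congr rfl fun i _ => Finset.sum_congr rfl fun j _ => by ring

lemma intc_mulVec (A : Matrix (Fin d) (Fin d) ℤ) (k : Fin d → ℤ) :
    intc (A.mulVec k) = (matR A).mulVec (intc k) := by
  funext i
  simp only [intc, matR, Matrix.mulVec, dotProduct, Matrix.map_apply]
  push_cast
  rfl

lemma matR_mul (A B : Matrix (Fin d) (Fin d) ℤ) : matR (A * B) = matR A * matR B := by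
  have : matR (A * B) = (A * B).map (Int.castRingHom ℝ) := rfl
  rw [this, Matrix.map_mul]; rfl

lemma char_add (k l : Fin d → ℤ) : char (k + l) = char k * char l := by
  funext ξ
  simp only [char, Pi.mul_apply, intc_add, dotv_add_left, e2pi_add]

lemma char_zero : char (0 : Fin d → ℤ) = fun _ => 1 := by
  funext ξ; simp [char, intc_zero, dotv, e2pi_zero]

lemma contDiff_char (k : Fin d → ℤ) : ContDiff ℝ (⊤ : ℕ∞) (char k) := by
  apply (Complex.contDiff_exp (𝕜 := ℝ)).comp
  apply ContDiff.mul contDiff_const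
  apply Complex.ofRealCLM.contDiff.comp
  exact ContDiff.sum fun i (_ : i ∈ Finset.univ) =>
    contDiff_const.mul ((ContinuousLinearMap.proj (R := ℝ) (φ := fun _ : Fin d => ℝ) i).contDiff)

noncomputable def T (d : ℕ) : Submodule ℂ ((Fin d → ℝ) → ℂ) :=
  Submodule.span ℂ (Set.range (char (d := d)))

lemma isTrigPoly_iff_mem {f : (Fin d → ℝ) → ℂ} : IsTrigPoly f ↔ f ∈ T d := by
  constructor
  · rintro ⟨h, hf⟩
    have hfe : f = ∑ k ∈ h.support, h k • char k := by
      funext ξ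
      rw [hf ξ, Finset.sum_apply]
      exact Finset.sum_congr rfl fun k _ => rfl
    rw [hfe]
    exact Submodule.sum_mem _ fun k _ =>
      Submodule.smul_mem _ _ (Submodule.subset_span ⟨k, rfl⟩)
  · intro hf
    rw [T, Finsupp.mem_span_range_iff_exists_finsupp] at hf
    obtain ⟨c, hc⟩ := hf
    refine ⟨c, fun ξ => ?_⟩
    rw [← hc]
    rw [Finsupp.sum, Finset.sum_apply]
    exact Finset.sum_congr rfl fun k _ => rfl

lemma const_mem_T (a : ℂ) : (fun _ : Fin d → ℝ => a) ∈ T d := by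
  have : (fun _ : Fin d → ℝ => a) = a • char (0 : Fin d → ℤ) := by
    funext ξ; simp [char_zero]
  rw [this]
  exact Submodule.smul_mem _ _ (Submodule.subset_span ⟨0, rfl⟩)

lemma char_mul_mem_T (k : Fin d → ℤ) {g : (Fin d → ℝ) → ℂ} (hg : g ∈ T d) :
    char k * g ∈ T d := by
  refine Submodule.span_induction (p := fun g _ => char k * g ∈ T d) ?_ ?_ ?_ ?_ hg
  · rintro _ ⟨l, rfl⟩
    rw [← char_add]
    exact Submodule.subset_span ⟨k + l, rfl⟩
  · simpa using Submodule.zero_mem (T d)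
  · intro a b _ _ ha hb
    rw [mul_add]; exact Submodule.add_mem _ ha hb
  · intro c a _ ha
    rw [mul_smul_comm]; exact Submodule.smul_mem _ _ ha

lemma mul_mem_T {f g : (Fin d → ℝ) → ℂ} (hf : f ∈ T d) (hg : g ∈ T d) :
    f * g ∈ T d := by
  refine Submodule.span_induction (p := fun f _ => f * g ∈ T d) ?_ ?_ ?_ ?_ hf
  · rintro _ ⟨k, rfl⟩; exact char_mul_mem_T k hg
  · simpa using Submodule.zero_mem (T d)
  · intro a b _ _ ha hb
    rw [add_mul]; exact Submodule.add_mem _ ha hb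
  · intro c a _ ha
    rw [smul_mul_assoc]; exact Submodule.smul_mem _ _ ha

lemma conj_mem_T {f : (Fin d → ℝ) → ℂ} (hf : f ∈ T d) :
    (fun ξ => (starRingEnd ℂ) (f ξ)) ∈ T d := by
  refine Submodule.span_induction (p := fun f _ => (fun ξ => (starRingEnd ℂ) (f ξ)) ∈ T d)
    ?_ ?_ ?_ ?_ hf
  · rintro _ ⟨k, rfl⟩
    have : (fun ξ => (starRingEnd ℂ) (char k ξ)) = char (-k) := by
      funext ξ
      simp only [char]
      rw [conj_e2pi, intc_neg, dotv_neg_left]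
    rw [this]
    exact Submodule.subset_span ⟨-k, rfl⟩
  · show (fun ξ : Fin d → ℝ => (starRingEnd ℂ) ((0 : (Fin d → ℝ) → ℂ) ξ)) ∈ T d
    have : (fun ξ : Fin d → ℝ => (starRingEnd ℂ) ((0 : (Fin d → ℝ) → ℂ) ξ)) =
        (0 : (Fin d → ℝ) → ℂ) := by funext ξ; simp
    rw [this]; exact Submodule.zero_mem (T d)
  · intro a b _ _ ha hb
    have : (fun ξ => (starRingEnd ℂ) ((a + b) ξ)) =
        (fun ξ => (starRingEnd ℂ) (a ξ)) + fun ξ => (starRingEnd ℂ) (b ξ) := by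
      funext ξ; simp
    rw [this]; exact Submodule.add_mem _ ha hb
  · intro c a _ ha
    have : (fun ξ => (starRingEnd ℂ) ((c • a) ξ)) =
        (starRingEnd ℂ) c • fun ξ => (starRingEnd ℂ) (a ξ) := by
      funext ξ; simp
    rw [this]; exact Submodule.smul_mem _ _ ha

lemma comp_mem_T (A : Matrix (Fin d) (Fin d) ℤ) {f : (Fin d → ℝ) → ℂ} (hf : f ∈ T d) :
    (fun ξ => f ((matR A)ᵀ.mulVec ξ)) ∈ T d := by
  refine Submodule.span_induction (p := fun f _ => (fun ξ => f ((matR A)ᵀ.mulVec ξ)) ∈ T d)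
    ?_ ?_ ?_ ?_ hf
  · rintro _ ⟨k, rfl⟩
    have : (fun ξ => char k ((matR A)ᵀ.mulVec ξ)) = char (A.mulVec k) := by
      funext ξ
      simp only [char]
      rw [dotv_transpose, ← intc_mulVec]
    rw [this]
    exact Submodule.subset_span ⟨A.mulVec k, rfl⟩
  · show (fun ξ : Fin d → ℝ => (0 : (Fin d → ℝ) → ℂ) ((matR A)ᵀ.mulVec ξ)) ∈ T d
    have : (fun ξ : Fin d → ℝ => (0 : (Fin d → ℝ) → ℂ) ((matR A)ᵀ.mulVec ξ)) =
        (0 : (Fin d → ℝ) → ℂ) := by funext ξ; simp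
    rw [this]; exact Submodule.zero_mem (T d)
  · intro a b _ _ ha hb
    exact Submodule.add_mem _ ha hb
  · intro c a _ ha
    exact Submodule.smul_mem _ _ ha

lemma pow_mem_T {f : (Fin d → ℝ) → ℂ} (hf : f ∈ T d) (j : ℕ) :
    (fun ξ => f ξ ^ j) ∈ T d := by
  induction j with
  | zero => simpa using const_mem_T (d := d) 1
  | succ j ih =>
    have : (fun ξ => f ξ ^ (j + 1)) = f * fun ξ => f ξ ^ j := by
      funext ξ; simp [pow_succ]; ring
    rw [this]
    exact mul_mem_T hf ih

lemma contDiff_of_mem_T {f : (Fin d → ℝ) → ℂ} (hf : f ∈ T d) : ContDiff ℝ (⊤ : ℕ∞) f := by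
  refine Submodule.span_induction (p := fun f _ => ContDiff ℝ (⊤ : ℕ∞) f) ?_ ?_ ?_ ?_ hf
  · rintro _ ⟨k, rfl⟩; exact contDiff_char k
  · exact contDiff_const
  · intro a b _ _ ha hb; exact ha.add hb
  · intro c a _ ha; exact ContDiff.const_smul c ha

lemma flat_mul {k : ℕ} {f g : (Fin d → ℝ) → ℂ} (hf : ContDiff ℝ (⊤ : ℕ∞) f)
    (hg : ContDiff ℝ (⊤ : ℕ∞) g) (hf0 : f 0 = 0)
    (hg0 : ∀ j, j < k → iteratedFDeriv ℝ j g 0 = 0) :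
    ∀ j, j < k + 1 → iteratedFDeriv ℝ j (fun ξ => f ξ * g ξ) 0 = 0 := by
  intro j hj
  have hb := norm_iteratedFDeriv_mul_le (𝕜 := ℝ) hf hg (0 : Fin d → ℝ)
    (n := j) (by exact_mod_cast le_top)
  have hz : ∑ i ∈ Finset.range (j + 1), (j.choose i : ℝ) * ‖iteratedFDeriv ℝ i f 0‖ *
      ‖iteratedFDeriv ℝ (j - i) g 0‖ = 0 := by
    refine Finset.sum_eq_zero fun i hi => ?_
    rw [Finset.mem_range] at hi
    rcases Nat.eq_zero_or_pos i with hi0 | hi0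
    · subst hi0
      simp [norm_iteratedFDeriv_zero, hf0]
    · have : j - i < k := by omega
      rw [hg0 _ this]
      simp
  rw [hz] at hb
  exact norm_le_zero_iff.mp hb

lemma flat_const_mul_pow {u : (Fin d → ℝ) → ℂ} (hu : ContDiff ℝ (⊤ : ℕ∞) u)
    (hu0 : u 0 = 0) (a : ℂ) :
    ∀ m : ℕ, ∀ j, j < m → iteratedFDeriv ℝ j (fun ξ => a * u ξ ^ m) 0 = 0 := by
  intro m
  induction m with
  | zero => intro j hj; omega
  | succ m ih =>
    have he : (fun ξ => a * u ξ ^ (m + 1)) = fun ξ => u ξ * (a * u ξ ^ m) := by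
      funext ξ; ring
    rw [he]
    exact flat_mul hu (contDiff_const.mul (hu.pow m)) hu0 ih

end DualMaskAux

set_option maxHeartbeats 1000000 in
open DualMaskAux in
theorem exists_symmetric_dual_mask {d n : ℕ}
    (H : Finset (Matrix (Fin d) (Fin d) ℤ))
    (hmul : ∀ A ∈ H, ∀ B ∈ H, A * B ∈ H)
    (hone : (1 : Matrix (Fin d) (Fin d) ℤ) ∈ H)
    (hinv : ∀ A ∈ H, ∃ B ∈ H, A * B = 1)
    (huni : ∀ A ∈ H, A.det = 1 ∨ A.det = -1)
    (M : Matrix (Fin d) (Fin d) ℤ) (hdet : (matR M).det ≠ 0)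
    (happr : ∀ E ∈ H, ∃ E' ∈ H, (matR M)⁻¹ * matR E * matR M = matR E')
    (c : Fin d → ℝ)
    (hc : ∀ E ∈ H, ∃ z : Fin d → ℤ, c - (matR E).mulVec c = intc z)
    (Dstar : Finset (Fin d → ℤ))
    (hDstar : ∀ α : Fin d → ℤ, ∃! q, q ∈ Dstar ∧ ∃ β : Fin d → ℤ, α = Mᵀ.mulVec β + q)
    (m0 : (Fin d → ℝ) → ℂ) (hm0 : IsTrigPoly m0) (hm0one : m0 0 = 1)
    (hsym : ∀ E ∈ H, ∀ ξ : Fin d → ℝ,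
      m0 ξ = e2pi (dotv (c - (matR E).mulVec c) ξ) * m0 ((matR E)ᵀ.mulVec ξ))
    (hsumrule : ∀ s ∈ Dstar, s ≠ 0 → ∀ k : ℕ, k < n →
      iteratedFDeriv ℝ k (fun ξ => m0 (((matR M)ᵀ)⁻¹.mulVec ξ)) (intc s) = 0) :
    ∃ mt0 : (Fin d → ℝ) → ℂ, IsTrigPoly mt0 ∧ mt0 0 = 1 ∧
      (∀ E ∈ H, ∀ ξ : Fin d → ℝ,
        mt0 ξ = e2pi (dotv (c - (matR E).mulVec c) ξ) * mt0 ((matR E)ᵀ.mulVec ξ)) ∧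
      (∀ k : ℕ, k < n →
        iteratedFDeriv ℝ k (fun ξ => 1 - m0 ξ * (starRingEnd ℂ) (mt0 ξ)) 0 = 0) := by
  classical
  have hHcard : (H.card : ℂ) ≠ 0 :=
    Nat.cast_ne_zero.mpr (Finset.card_ne_zero.mpr ⟨1, hone⟩)
  set u : (Fin d → ℝ) → ℂ := fun ξ => 1 - m0 ξ with hu_def
  set g : (Fin d → ℝ) → ℂ := fun ξ => ∑ j ∈ Finset.range (n + 1), u ξ ^ j with hg_def
  set G : (Fin d → ℝ) → ℂ := fun ξ => (starRingEnd ℂ) (g ξ) with hG_def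
  set mt0 : (Fin d → ℝ) → ℂ := fun ξ =>
    (H.card : ℂ)⁻¹ * ∑ E ∈ H, e2pi (dotv (c - (matR E).mulVec c) ξ) * G ((matR E)ᵀ.mulVec ξ)
    with hmt_def
  have hm0T : m0 ∈ T d := isTrigPoly_iff_mem.mp hm0
  have huT : u ∈ T d := Submodule.sub_mem _ (const_mem_T 1) hm0T
  have hgT : g ∈ T d := by
    have he : g = ∑ j ∈ Finset.range (n + 1), (fun ξ => u ξ ^ j) := by
      funext ξ; simp only [hg_def, Finset.sum_apply]
    rw [he]
    exact Submodule.sum_mem _ fun j _ => pow_mem_T huT j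
  have hGT : G ∈ T d := conj_mem_T hgT
  have hmtT : mt0 ∈ T d := by
    have h1 : (fun ξ => ∑ E ∈ H,
        e2pi (dotv (c - (matR E).mulVec c) ξ) * G ((matR E)ᵀ.mulVec ξ)) ∈ T d := by
      have he : (fun ξ => ∑ E ∈ H,
          e2pi (dotv (c - (matR E).mulVec c) ξ) * G ((matR E)ᵀ.mulVec ξ)) =
          ∑ E ∈ H, fun ξ =>
            e2pi (dotv (c - (matR E).mulVec c) ξ) * G ((matR E)ᵀ.mulVec ξ) := by
        funext ξ; rw [Finset.sum_apply]
      rw [he]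
      refine Submodule.sum_mem _ fun E hE => ?_
      obtain ⟨z, hz⟩ := hc E hE
      rw [hz]
      exact mul_mem_T (Submodule.subset_span ⟨z, rfl⟩) (comp_mem_T E hGT)
    have he2 : mt0 = (H.card : ℂ)⁻¹ • fun ξ => ∑ E ∈ H,
        e2pi (dotv (c - (matR E).mulVec c) ξ) * G ((matR E)ᵀ.mulVec ξ) := by
      funext ξ; simp only [hmt_def, Pi.smul_apply, smul_eq_mul]
    rw [he2]
    exact Submodule.smul_mem _ _ h1
  have hu0 : u 0 = 0 := by simp [hu_def, hm0one]
  have hg0 : g 0 = 1 := by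
    simp only [hg_def, hu0]
    rw [Finset.sum_eq_single_of_mem 0 (Finset.mem_range.mpr (Nat.succ_pos n))
      (fun j _ hj => zero_pow hj)]
    exact pow_zero 0
  have hG0 : G 0 = 1 := by simp [hG_def, hg0]
  have hmt0 : mt0 0 = 1 := by
    simp only [hmt_def, dotv_zero_right, e2pi_zero, Matrix.mulVec_zero, hG0, one_mul, mul_one,
      Finset.sum_const, nsmul_eq_mul]
    exact inv_mul_cancel₀ hHcard
  refine ⟨mt0, isTrigPoly_iff_mem.mpr hmtT, hmt0, ?_, ?_⟩
  · -- symmetry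
    intro E hE ξ
    obtain ⟨B, hB, hEB⟩ := hinv E hE
    have hBE : B * E = 1 := mul_eq_one_comm.mp hEB
    have hterm : ∀ F ∈ H,
        e2pi (dotv (c - (matR E).mulVec c) ξ) *
          (e2pi (dotv (c - (matR F).mulVec c) ((matR E)ᵀ.mulVec ξ)) *
            G ((matR F)ᵀ.mulVec ((matR E)ᵀ.mulVec ξ))) =
        e2pi (dotv (c - (matR (E * F)).mulVec c) ξ) * G ((matR (E * F))ᵀ.mulVec ξ) := by
      intro F hF
      have h1 : (matR F)ᵀ.mulVec ((matR E)ᵀ.mulVec ξ) = (matR (E * F))ᵀ.mulVec ξ := by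
        rw [Matrix.mulVec_mulVec, matR_mul, Matrix.transpose_mul]
      have h2 : dotv (c - (matR F).mulVec c) ((matR E)ᵀ.mulVec ξ) =
          dotv ((matR E).mulVec c - (matR (E * F)).mulVec c) ξ := by
        rw [dotv_transpose, Matrix.mulVec_sub, Matrix.mulVec_mulVec, matR_mul]
      have h3 : e2pi (dotv (c - (matR E).mulVec c) ξ) *
          e2pi (dotv ((matR E).mulVec c - (matR (E * F)).mulVec c) ξ) =
          e2pi (dotv (c - (matR (E * F)).mulVec c) ξ) := by
        rw [← e2pi_add, ← dotv_add_left, sub_add_sub_cancel]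
      rw [h1, h2, ← mul_assoc, h3]
    calc mt0 ξ = (H.card : ℂ)⁻¹ * ∑ K ∈ H,
        e2pi (dotv (c - (matR K).mulVec c) ξ) * G ((matR K)ᵀ.mulVec ξ) := by
          simp only [hmt_def]
      _ = (H.card : ℂ)⁻¹ * ∑ F ∈ H, e2pi (dotv (c - (matR E).mulVec c) ξ) *
          (e2pi (dotv (c - (matR F).mulVec c) ((matR E)ᵀ.mulVec ξ)) *
            G ((matR F)ᵀ.mulVec ((matR E)ᵀ.mulVec ξ))) := by
          congr 1
          refine Finset.sum_nbij' (fun K => B * K) (fun F => E * F)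
            (fun K hK => hmul B hB K hK) (fun F hF => hmul E hE F hF) ?_ ?_ ?_
          · intro K hK; show E * (B * K) = K; rw [← mul_assoc, hEB, one_mul]
          · intro F hF; show B * (E * F) = F; rw [← mul_assoc, hBE, one_mul]
          · intro K hK
            have hBK := hmul B hB K hK
            have hEBK : E * (B * K) = K := by rw [← mul_assoc, hEB, one_mul]
            conv_lhs => rw [← hEBK]
            exact (hterm (B * K) hBK).symm
      _ = e2pi (dotv (c - (matR E).mulVec c) ξ) * mt0 ((matR E)ᵀ.mulVec ξ) := by
          simp only [hmt_def]
          rw [← Finset.mul_sum]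
          ring
  · -- flatness
    intro k hk
    have hm0c : ContDiff ℝ (⊤ : ℕ∞) m0 := contDiff_of_mem_T hm0T
    have huc : ContDiff ℝ (⊤ : ℕ∞) u := contDiff_const.sub hm0c
    set p : (Fin d → ℝ) → ℂ := fun η => (H.card : ℂ)⁻¹ * u η ^ (n + 1) with hp_def
    have hpc : ContDiff ℝ (⊤ : ℕ∞) p := contDiff_const.mul (huc.pow _)
    set L : Matrix (Fin d) (Fin d) ℤ → (Fin d → ℝ) →L[ℝ] (Fin d → ℝ) :=
      fun E => LinearMap.toContinuousLinearMap (Matrix.mulVecLin (matR E)ᵀ) with hL_def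
    have hL : ∀ E ξ, L E ξ = (matR E)ᵀ.mulVec ξ := fun E ξ => rfl
    have hgeom : ∀ η, 1 - m0 η * g η = u η ^ (n + 1) := by
      intro η
      have h := geom_sum_mul (u η) (n + 1)
      have hm : m0 η = 1 - u η := by simp only [hu_def]; ring
      simp only [hg_def]
      rw [hm]
      linear_combination h
    have key : (fun ξ => 1 - m0 ξ * (starRingEnd ℂ) (mt0 ξ)) =
        fun ξ => ∑ E ∈ H, (p ∘ (L E)) ξ := by
      funext ξ
      have hconj : (starRingEnd ℂ) (mt0 ξ) = (H.card : ℂ)⁻¹ *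
          ∑ F ∈ H, e2pi (-(dotv (c - (matR F).mulVec c) ξ)) * g ((matR F)ᵀ.mulVec ξ) := by
        simp only [hmt_def]
        rw [_root_.map_mul, map_inv₀, map_natCast, map_sum]
        congr 1
        refine Finset.sum_congr rfl fun F hF => ?_
        simp only [_root_.map_mul, conj_e2pi, hG_def, Complex.conj_conj]
      have hsum : ∀ F ∈ H, m0 ξ *
          (e2pi (-(dotv (c - (matR F).mulVec c) ξ)) * g ((matR F)ᵀ.mulVec ξ)) =
          m0 ((matR F)ᵀ.mulVec ξ) * g ((matR F)ᵀ.mulVec ξ) := by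
        intro F hF
        rw [hsym F hF ξ]
        calc e2pi (dotv (c - (matR F).mulVec c) ξ) * m0 ((matR F)ᵀ.mulVec ξ) *
            (e2pi (-(dotv (c - (matR F).mulVec c) ξ)) * g ((matR F)ᵀ.mulVec ξ))
            = (e2pi (dotv (c - (matR F).mulVec c) ξ) *
                e2pi (-(dotv (c - (matR F).mulVec c) ξ))) *
              (m0 ((matR F)ᵀ.mulVec ξ) * g ((matR F)ᵀ.mulVec ξ)) := by ring
          _ = m0 ((matR F)ᵀ.mulVec ξ) * g ((matR F)ᵀ.mulVec ξ) := by
              rw [e2pi_mul_neg, one_mul]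
      calc 1 - m0 ξ * (starRingEnd ℂ) (mt0 ξ)
          = 1 - (H.card : ℂ)⁻¹ * (m0 ξ * ∑ F ∈ H,
            e2pi (-(dotv (c - (matR F).mulVec c) ξ)) * g ((matR F)ᵀ.mulVec ξ)) := by
            rw [hconj, mul_left_comm]
        _ = 1 - (H.card : ℂ)⁻¹ * ∑ F ∈ H, m0 ξ *
            (e2pi (-(dotv (c - (matR F).mulVec c) ξ)) * g ((matR F)ᵀ.mulVec ξ)) := by
            rw [Finset.mul_sum]
        _ = 1 - (H.card : ℂ)⁻¹ * ∑ F ∈ H,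
            m0 ((matR F)ᵀ.mulVec ξ) * g ((matR F)ᵀ.mulVec ξ) := by
            rw [Finset.sum_congr rfl hsum]
        _ = (H.card : ℂ)⁻¹ * ∑ F ∈ H,
            (1 - m0 ((matR F)ᵀ.mulVec ξ) * g ((matR F)ᵀ.mulVec ξ)) := by
            rw [Finset.sum_sub_distrib, Finset.sum_const, nsmul_eq_mul, mul_one, mul_sub,
              inv_mul_cancel₀ hHcard]
        _ = ∑ E ∈ H, (p ∘ (L E)) ξ := by
            rw [Finset.mul_sum]
            refine Finset.sum_congr rfl fun F _ => ?_
            rw [hgeom]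
            rfl
    rw [key]
    have hcd : ∀ E ∈ H, ContDiff ℝ (k : ℕ) (p ∘ (L E)) := by
      intro E _
      exact (hpc.comp (L E).contDiff).of_le (by exact_mod_cast le_top)
    rw [iteratedFDeriv_sum hcd, Finset.sum_apply]
    refine Finset.sum_eq_zero fun E _ => ?_
    have hcomp := ContinuousLinearMap.iteratedFDeriv_comp_right (L E) hpc
      (0 : Fin d → ℝ) (i := k) (by exact_mod_cast le_top)
    rw [hcomp, map_zero]
    have hz : iteratedFDeriv ℝ k p 0 = 0 := by
      simp only [hp_def]
      exact flat_const_mul_pow huc hu0 _ (n + 1) k (by omega)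
    rw [hz]
    ext m
    simp
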